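/- (Center Theorem at step 0.) If x, y ∈ Q₀, then m(x, y)² ≤ |v(θ* + x·ω) − v(θ* + y·ω)| ≤ 2δ₀, where m(x, y) := min(‖(x − y)·ω‖, ‖2θ* + (x + y)·ω‖); in particular m(x, y) ≤ 2δ₀^{1/2}. -/

import Mathlib

open scoped InnerProductSpace

/-- `‖t‖`: the distance from a real number `t` to the nearest integer. -/
noncomputable def distToInt (t : ℝ) : ℝ := |t - round t|

/-- The ℓ¹ norm `‖x‖₁ = Σᵢ |xᵢ|` on `ℤ^d`. -/
def nrm1 {d : ℕ} (x : Fin d → ℤ) : ℤ := ∑ i, |x i|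

/-- The dot product `x·ω` for `x ∈ ℤ^d`, `ω ∈ ℝ^d`. -/
noncomputable def dotw {d : ℕ} (x : Fin d → ℤ) (ω : Fin d → ℝ) : ℝ := ∑ i, (x i : ℝ) * ω i

/-- The ℓ¹ norm on `ℝ^d`. -/
noncomputable def nrm1R {d : ℕ} (x : Fin d → ℝ) : ℝ := ∑ i, |x i|

/-- The dot product on `ℝ^d`. -/
noncomputable def dotwR {d : ℕ} (x ω : Fin d → ℝ) : ℝ := ∑ i, x i * ω i

/-- The standing hypotheses on the `C²`-cosine like potential `v` with parameter `a`:
`v` is `C²`, even and `1`-periodic, `0` is a nondegenerate maximum, `1/2` is a nondegenerate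
minimum, these are the only critical points modulo `1`, `|v''| > 3` near `0` and `1/2`
(within distance `a`), and `|v'| > 3` away from `0` and `1/2`. -/
structure CosLike (v : ℝ → ℝ) (a : ℝ) : Prop where
  smooth : ContDiff ℝ 2 v
  even : ∀ θ, v (-θ) = v θ
  periodic : ∀ θ, v (θ + 1) = v θ
  a_pos : 0 < a
  a_lt : a < 1 / 10
  critMax : deriv v 0 = 0
  critMax' : deriv (deriv v) 0 < 0
  critMin : deriv v (1 / 2) = 0
  critMin' : 0 < deriv (deriv v) (1 / 2)
  onlyCrit : ∀ θ ∈ Set.Ico (0 : ℝ) 1, deriv v θ = 0 → θ = 0 ∨ θ = 1 / 2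
  deriv2_big : ∀ θ, (distToInt θ < a ∨ distToInt (θ - 1 / 2) < a) → 3 < |deriv (deriv v) θ|
  deriv_big : ∀ θ, a ≤ distToInt θ → a ≤ distToInt (θ - 1 / 2) → 3 < |deriv v θ|

/-- `M₁ = sup_θ max(|v(θ)|, |v'(θ)|, |v''(θ)|)`. -/
noncomputable def M1 (v : ℝ → ℝ) : ℝ :=
  ⨆ θ : ℝ, max |v θ| (max |deriv v θ| |deriv (deriv v) θ|)

/-- The finite-volume Schrödinger operator `H_Λ(θ) = ε Δ + v(θ + x·ω) δ_{x,y}` as a matrix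
indexed by a finite set `Λ ⊂ ℤ^d`. -/
noncomputable def Hmat {d : ℕ} (ε : ℝ) (v : ℝ → ℝ) (ω : Fin d → ℝ) (θ : ℝ)
    (Λ : Finset (Fin d → ℤ)) : Matrix Λ Λ ℝ :=
  Matrix.of fun x y =>
    if nrm1 (x.1 - y.1) = 1 then ε
    else if x = y then v (θ + dotw x.1 ω) else 0

/-- The discrete ℓ¹-ball `{x ∈ ℤ^d : ‖x − c‖₁ ≤ r}` as a `Finset`. -/
noncomputable def ball1 {d : ℕ} (c : Fin d → ℤ) (r : ℝ) : Finset (Fin d → ℤ) :=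
  (Finset.Icc (fun i => c i - ⌈r⌉) (fun i => c i + ⌈r⌉)).filter
    fun x => ((nrm1 (x - c) : ℤ) : ℝ) ≤ r

/-- The discrete ℓ¹-ball around a (possibly non-integer) center `c ∈ ℝ^d`. -/
noncomputable def ballR {d : ℕ} (c : Fin d → ℝ) (r : ℝ) : Finset (Fin d → ℤ) :=
  (Finset.Icc (fun i => ⌊c i - r⌋ - 1) (fun i => ⌈c i + r⌉ + 1)).filter
    fun x => nrm1R (fun i => (x i : ℝ) - c i) ≤ r

/-- The nearest neighbours of `x` in `ℤ^d`. -/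
noncomputable def nbrs {d : ℕ} (x : Fin d → ℤ) : Finset (Fin d → ℤ) :=
  (Finset.Icc (fun i => x i - 1) (fun i => x i + 1)).filter fun y => nrm1 (y - x) = 1

/-- `δ₀ = ε₀^{1/20}`. -/
noncomputable def delta0 (ε₀ : ℝ) : ℝ := ε₀ ^ ((1 : ℝ) / 20)

lemma distToInt_nonneg (t : ℝ) : 0 ≤ distToInt t := abs_nonneg _
lemma distToInt_le (t : ℝ) (n : ℤ) : distToInt t ≤ |t - n| := round_le t n
lemma distToInt_eq_self {t : ℝ} (h0 : 0 ≤ t) (h1 : t ≤ 1 / 2) : distToInt t = t := by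
  rcases lt_or_eq_of_le h1 with h | h
  · have hr : round t = 0 := round_eq_zero_iff.2 ⟨by linarith, h⟩
    simp [distToInt, hr, abs_of_nonneg h0]
  · have : round t = 1 := by subst h; rw [round_eq]; norm_num
    rw [distToInt, this, h]; norm_num
lemma distToInt_neg (t : ℝ) : distToInt (-t) = distToInt t := by
  apply le_antisymm
  · calc distToInt (-t) ≤ |(-t) - (-(round t) : ℤ)| := distToInt_le _ _
      _ = distToInt t := by push_cast; rw [distToInt, ← abs_neg]; ring_nf
  · calc distToInt t ≤ |t - (-(round (-t)) : ℤ)| := distToInt_le _ _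
      _ = distToInt (-t) := by push_cast; rw [distToInt, ← abs_neg]; ring_nf

section core
variable {v : ℝ → ℝ} {a : ℝ} (hv : CosLike v a)

lemma diff_v (hv : CosLike v a) : Differentiable ℝ v := by
  have := (contDiff_succ_iff_deriv (n := 1)).1 (by exact_mod_cast hv.smooth)
  exact this.1

lemma diff_dv (hv : CosLike v a) : Differentiable ℝ (deriv v) := by
  have := (contDiff_succ_iff_deriv (n := 1)).1 (by exact_mod_cast hv.smooth)
  exact (contDiff_one_iff_deriv.1 this.2.2).1

lemma cont_ddv (hv : CosLike v a) : Continuous (deriv (deriv v)) := by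
  have := (contDiff_succ_iff_deriv (n := 1)).1 (by exact_mod_cast hv.smooth)
  exact (contDiff_one_iff_deriv.1 this.2.2).2

lemma dti_lt_a {θ : ℝ} (hv : CosLike v a) (h0 : 0 ≤ θ) (h1 : θ < a) : distToInt θ < a := by
  calc distToInt θ ≤ |θ - (0 : ℤ)| := distToInt_le θ 0
    _ = θ := by rw [Int.cast_zero, sub_zero, abs_of_nonneg h0]
    _ < a := h1

lemma dti_half_lt {θ : ℝ} (h0 : 1/2 - a < θ) (h1 : θ ≤ 1/2) (ha : 0 < a) :
    distToInt (θ - 1/2) < a := by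
  have : distToInt (θ - 1/2) = distToInt (1/2 - θ) := by
    rw [← distToInt_neg (θ - 1/2)]; ring_nf
  rw [this]
  calc distToInt (1/2 - θ) ≤ |1/2 - θ - (0:ℤ)| := distToInt_le _ 0
    _ = 1/2 - θ := by rw [Int.cast_zero, sub_zero, abs_of_nonneg (by linarith)]
    _ < a := by linarith

lemma ddv_neg (hv : CosLike v a) : ∀ θ, 0 ≤ θ → θ < a → deriv (deriv v) θ < -3 := by
  intro θ h0 h1
  have big : 3 < |deriv (deriv v) θ| := hv.deriv2_big θ (Or.inl (dti_lt_a hv h0 h1))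
  rcases lt_abs.1 big with h | h
  · exfalso
    have hivt : (0:ℝ) ∈ Set.Icc (deriv (deriv v) 0) (deriv (deriv v) θ) :=
      ⟨le_of_lt hv.critMax', by linarith⟩
    obtain ⟨ζ, hζ, hz⟩ := intermediate_value_Icc h0 ((cont_ddv hv).continuousOn) hivt
    have := hv.deriv2_big ζ (Or.inl (dti_lt_a hv hζ.1 (lt_of_le_of_lt hζ.2 h1)))
    rw [hz] at this; norm_num at this
  · linarith

lemma ddv_pos (hv : CosLike v a) : ∀ θ, 1/2 - a < θ → θ ≤ 1/2 → 3 < deriv (deriv v) θ := by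
  intro θ h0 h1
  have big : 3 < |deriv (deriv v) θ| :=
    hv.deriv2_big θ (Or.inr (dti_half_lt h0 h1 hv.a_pos))
  rcases lt_abs.1 big with h | h
  · exact h
  · exfalso
    have hivt : (0:ℝ) ∈ Set.Icc (deriv (deriv v) θ) (deriv (deriv v) (1/2)) :=
      ⟨by linarith, le_of_lt hv.critMin'⟩
    obtain ⟨ζ, hζ, hz⟩ := intermediate_value_Icc h1 ((cont_ddv hv).continuousOn) hivt
    have := hv.deriv2_big ζ (Or.inr (dti_half_lt (lt_of_lt_of_le h0 hζ.1) hζ.2 hv.a_pos))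
    rw [hz] at this; norm_num at this

lemma dv_le_a (hv : CosLike v a) : ∀ θ, 0 ≤ θ → θ ≤ a → deriv v θ ≤ -3 * θ := by
  intro θ h0 h1
  have hP : AntitoneOn (fun θ => deriv v θ + 3 * θ) (Set.Icc 0 a) := by
    apply antitoneOn_of_deriv_nonpos (convex_Icc 0 a)
    · exact ((diff_dv hv).continuous.add (by continuity)).continuousOn
    · exact ((diff_dv hv).add (by fun_prop)).differentiableOn
    · intro x hx
      rw [interior_Icc] at hx
      have hd : HasDerivAt (fun θ => deriv v θ + 3 * θ)
          (deriv (deriv v) x + 3 * 1) x :=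
        ((diff_dv hv) x).hasDerivAt.add ((hasDerivAt_id x).const_mul 3)
      rw [hd.deriv]
      have := ddv_neg hv x hx.1.le hx.2
      linarith
  have := hP (Set.left_mem_Icc.2 hv.a_pos.le) ⟨h0, h1⟩ h0
  simp only [hv.critMax] at this
  linarith

lemma dv_mid (hv : CosLike v a) : ∀ θ, a ≤ θ → θ ≤ 1/2 - a → deriv v θ < -3 := by
  have ha := hv.a_pos
  have ha' := hv.a_lt
  have hbig : ∀ θ, a ≤ θ → θ ≤ 1/2 - a → 3 < |deriv v θ| := by
    intro θ h0 h1
    apply hv.deriv_big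
    · rw [distToInt_eq_self (by linarith) (by linarith)]; exact h0
    · have : distToInt (θ - 1/2) = distToInt (1/2 - θ) := by
        rw [← distToInt_neg (θ - 1/2)]; ring_nf
      rw [this, distToInt_eq_self (by linarith) (by linarith)]; linarith
  have hva : deriv v a < -3 := by
    have h1 := dv_le_a hv a ha.le le_rfl
    rcases lt_abs.1 (hbig a le_rfl (by linarith)) with h | h
    · linarith
    · linarith
  intro θ h0 h1
  rcases eq_or_lt_of_le h0 with rfl | h0'
  · exact hva
  rcases lt_abs.1 (hbig θ h0 h1) with h | h
  · exfalso
    have hivt : (0:ℝ) ∈ Set.Icc (deriv v a) (deriv v θ) := ⟨by linarith, by linarith⟩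
    obtain ⟨ζ, hζ, hz⟩ :=
      intermediate_value_Icc h0 ((diff_dv hv).continuous.continuousOn) hivt
    have := hbig ζ hζ.1 (le_trans hζ.2 h1)
    rw [hz] at this; norm_num at this
  · linarith

lemma dv_le_b (hv : CosLike v a) :
    ∀ θ, 1/2 - a ≤ θ → θ ≤ 1/2 → deriv v θ ≤ 3 * θ - 3/2 := by
  have ha := hv.a_pos
  have ha' := hv.a_lt
  intro θ h0 h1
  have hP : MonotoneOn (fun θ => deriv v θ - 3 * θ) (Set.Icc (1/2 - a) (1/2)) := by
    apply monotoneOn_of_deriv_nonneg (convex_Icc _ _)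
    · exact ((diff_dv hv).continuous.sub (by continuity)).continuousOn
    · exact ((diff_dv hv).sub (by fun_prop)).differentiableOn
    · intro x hx
      rw [interior_Icc] at hx
      have hd : HasDerivAt (fun θ => deriv v θ - 3 * θ)
          (deriv (deriv v) x - 3 * 1) x :=
        ((diff_dv hv) x).hasDerivAt.sub ((hasDerivAt_id x).const_mul 3)
      rw [hd.deriv]
      have := ddv_pos hv x hx.1 hx.2.le
      linarith
  have := hP ⟨h0, h1⟩ (Set.right_mem_Icc.2 (by linarith)) h1
  simp only [hv.critMin] at this
  linarith

lemma core_lemma (hv : CosLike v a) {s t : ℝ} (hs : 0 ≤ s) (hst : s ≤ t) (ht : t ≤ 1/2) :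
    (t - s)^2 ≤ v s - v t := by
  have ha := hv.a_pos
  have ha' := hv.a_lt
  rcases le_or_gt t (1/2 - a) with hc1 | hc1
  · have hF : AntitoneOn (fun θ => v θ + 3/2 * θ^2) (Set.Icc 0 (1/2 - a)) := by
      apply antitoneOn_of_deriv_nonpos (convex_Icc _ _)
      · exact ((diff_v hv).continuous.add (by continuity)).continuousOn
      · exact ((diff_v hv).add (by fun_prop)).differentiableOn
      · intro x hx
        rw [interior_Icc] at hx
        have hd : HasDerivAt (fun θ => v θ + 3/2 * θ^2)
            (deriv v x + 3/2 * (2 * x)) x := by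
          have h2 : HasDerivAt (fun θ : ℝ => θ^2) (2 * x) x := by
            simpa using (hasDerivAt_pow 2 x)
          exact ((diff_v hv) x).hasDerivAt.add (h2.const_mul (3/2))
        rw [hd.deriv]
        have hx1 := hx.1
        have hx2 := hx.2
        rcases le_or_gt x a with hxa | hxa
        · have := dv_le_a hv x hx.1.le hxa; linarith
        · have := dv_mid hv x hxa.le hx.2.le; linarith
    have := hF ⟨hs, by linarith⟩ ⟨by linarith, hc1⟩ hst
    simp only at this
    nlinarith [sq_nonneg (t - s), sq_nonneg (t + s)]
  rcases le_or_gt a s with hc2 | hc2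
  · have hG : AntitoneOn (fun θ => v θ + 3/2 * θ - 3/2 * θ^2) (Set.Icc a (1/2)) := by
      apply antitoneOn_of_deriv_nonpos (convex_Icc _ _)
      · apply ContinuousOn.sub
        · exact ((diff_v hv).continuous.add (by continuity)).continuousOn
        · exact (by continuity : Continuous fun θ:ℝ => 3/2 * θ^2).continuousOn
      · exact (((diff_v hv).add (by fun_prop)).sub (by fun_prop)).differentiableOn
      · intro x hx
        rw [interior_Icc] at hx
        have hd : HasDerivAt (fun θ => v θ + 3/2 * θ - 3/2 * θ^2)
            (deriv v x + 3/2 * 1 - 3/2 * (2 * x)) x := by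
          have h2 : HasDerivAt (fun θ : ℝ => θ^2) (2 * x) x := by
            simpa using (hasDerivAt_pow 2 x)
          exact (((diff_v hv) x).hasDerivAt.add
            ((hasDerivAt_id x).const_mul (3/2))).sub (h2.const_mul (3/2))
        rw [hd.deriv]
        have hx1 := hx.1
        have hx2 := hx.2
        rcases le_or_gt x (1/2 - a) with hxa | hxa
        · have := dv_mid hv x hx.1.le hxa; linarith
        · have := dv_le_b hv x hxa.le hx.2.le; linarith
    have := hG ⟨hc2, by linarith⟩ ⟨by linarith, ht⟩ hst
    simp only at this
    nlinarith [sq_nonneg (t - s)]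
  · have hmono : AntitoneOn v (Set.Icc 0 (1/2)) := by
      apply antitoneOn_of_deriv_nonpos (convex_Icc _ _)
      · exact (diff_v hv).continuous.continuousOn
      · exact (diff_v hv).differentiableOn
      · intro x hx
        rw [interior_Icc] at hx
        have hx1 := hx.1
        have hx2 := hx.2
        rcases le_or_gt x a with hxa | hxa
        · have := dv_le_a hv x hx.1.le hxa; linarith
        rcases le_or_gt x (1/2 - a) with hxb | hxb
        · have := dv_mid hv x hxa.le hxb; linarith
        · have := dv_le_b hv x hxb.le hx.2.le; linarith
    have hL : AntitoneOn (fun θ => v θ + 3 * θ) (Set.Icc a (1/2 - a)) := by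
      apply antitoneOn_of_deriv_nonpos (convex_Icc _ _)
      · exact ((diff_v hv).continuous.add (by continuity)).continuousOn
      · exact ((diff_v hv).add (by fun_prop)).differentiableOn
      · intro x hx
        rw [interior_Icc] at hx
        have hd : HasDerivAt (fun θ => v θ + 3 * θ) (deriv v x + 3 * 1) x :=
          ((diff_v hv) x).hasDerivAt.add ((hasDerivAt_id x).const_mul 3)
        rw [hd.deriv]
        have := dv_mid hv x hx.1.le hx.2.le
        linarith
    have h1 : v a ≤ v s := hmono ⟨hs, by linarith⟩ ⟨by linarith, by linarith⟩ hc2.le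
    have h2 : v t ≤ v (1/2 - a) := hmono ⟨by linarith, by linarith⟩ ⟨by linarith, ht⟩ hc1.le
    have h3 := hL (Set.left_mem_Icc.2 (by linarith)) (Set.right_mem_Icc.2 (by linarith))
      (by linarith)
    simp only at h3
    nlinarith [sq_nonneg (t - s)]

lemma v_fold (hv : CosLike v a) (θ : ℝ) : v θ = v (distToInt θ) := by
  have hp : Function.Periodic v 1 := hv.periodic
  have h1 : v θ = v (θ - round θ) := by
    have := hp.sub_int_mul_eq (x := θ) (round θ)
    simpa using this.symm
  rcases le_total 0 (θ - (round θ : ℝ)) with h | h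
  · rw [h1, distToInt, abs_of_nonneg h]
  · rw [h1, distToInt, abs_of_nonpos h, hv.even]

end core

lemma distToInt_le_half (t : ℝ) : distToInt t ≤ 1 / 2 := abs_sub_round t


lemma min_dist_le (α β : ℝ) :
    min (distToInt (α - β)) (distToInt (α + β)) ≤ |distToInt α - distToInt β| := by
  set u := α - (round α : ℝ) with hu'
  set w := β - (round β : ℝ) with hw'
  have hdu : distToInt α = |u| := rfl
  have hdw : distToInt β = |w| := rfl
  have h1 : distToInt (α - β) ≤ |u - w| := by
    have := distToInt_le (α - β) (round α - round β)
    push_cast at this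
    calc distToInt (α - β) ≤ _ := this
      _ = |u - w| := by rw [hu', hw']; ring_nf
  have h2 : distToInt (α + β) ≤ |u + w| := by
    have := distToInt_le (α + β) (round α + round β)
    push_cast at this
    calc distToInt (α + β) ≤ _ := this
      _ = |u + w| := by rw [hu', hw']; ring_nf
  rw [hdu, hdw]
  rcases le_total 0 u with hu | hu <;> rcases le_total 0 w with hw | hw
  · refine (min_le_left _ _).trans (h1.trans_eq ?_)
    rw [abs_of_nonneg hu, abs_of_nonneg hw]
  · refine (min_le_right _ _).trans (h2.trans_eq ?_)
    rw [abs_of_nonneg hu, abs_of_nonpos hw]; ring_nf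
  · refine (min_le_right _ _).trans (h2.trans_eq ?_)
    rw [abs_of_nonpos hu, abs_of_nonneg hw, ← abs_neg]; ring_nf
  · refine (min_le_left _ _).trans (h1.trans_eq ?_)
    rw [abs_of_nonpos hu, abs_of_nonpos hw, ← abs_neg]; ring_nf

lemma dotw_sub' {d : ℕ} (x y : Fin d → ℤ) (ω : Fin d → ℝ) :
    dotw (x - y) ω = dotw x ω - dotw y ω := by
  simp only [dotw, Pi.sub_apply, Int.cast_sub, sub_mul, Finset.sum_sub_distrib]

lemma dotw_add' {d : ℕ} (x y : Fin d → ℤ) (ω : Fin d → ℝ) :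
    dotw (x + y) ω = dotw x ω + dotw y ω := by
  simp only [dotw, Pi.add_apply, Int.cast_add, add_mul, Finset.sum_add_distrib]

/-- Center Theorem at step 0: if `x, y ∈ Q₀` then
`m(x,y)² ≤ |v(θ* + x·ω) − v(θ* + y·ω)| ≤ 2δ₀`, where
`m(x,y) = min(‖(x − y)·ω‖, ‖2θ* + (x + y)·ω‖)`; in particular `m(x,y) ≤ 2δ₀^{1/2}`. -/
theorem statement2 (v : ℝ → ℝ) (a : ℝ) (hv : CosLike v a) {d : ℕ}
    (ω : Fin d → ℝ) (hω : ∀ i, ω i ∈ Set.Icc (0 : ℝ) 1)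
    (θs Es ε₀ : ℝ) (hε₀ : 0 < ε₀)
    (x y : Fin d → ℤ)
    (hx : |v (θs + dotw x ω) - Es| < delta0 ε₀)
    (hy : |v (θs + dotw y ω) - Es| < delta0 ε₀) :
    min (distToInt (dotw (x - y) ω)) (distToInt (2 * θs + dotw (x + y) ω)) ^ 2
        ≤ |v (θs + dotw x ω) - v (θs + dotw y ω)| ∧
      |v (θs + dotw x ω) - v (θs + dotw y ω)| ≤ 2 * delta0 ε₀ ∧
      min (distToInt (dotw (x - y) ω)) (distToInt (2 * θs + dotw (x + y) ω))
        ≤ 2 * delta0 ε₀ ^ ((1 : ℝ) / 2) := by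
  
  have hδ : 0 < delta0 ε₀ := Real.rpow_pos_of_pos hε₀ _
  set θ1 := θs + dotw x ω with hθ1
  set θ2 := θs + dotw y ω with hθ2
  have e1 : dotw (x - y) ω = θ1 - θ2 := by rw [dotw_sub']; ring
  have e2 : 2 * θs + dotw (x + y) ω = θ1 + θ2 := by rw [dotw_add']; ring
  rw [e1, e2]
  set m := min (distToInt (θ1 - θ2)) (distToInt (θ1 + θ2)) with hm
  have hm0 : 0 ≤ m := le_min (distToInt_nonneg _) (distToInt_nonneg _)
  set s := distToInt θ1 with hsdef
  set t := distToInt θ2 with htdef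
  have hvs : v θ1 = v s := v_fold hv θ1
  have hvt : v θ2 = v t := v_fold hv θ2
  have hmle : m ≤ |s - t| := min_dist_le θ1 θ2
  have hs0 : 0 ≤ s := distToInt_nonneg _
  have ht0 : 0 ≤ t := distToInt_nonneg _
  have hs2 : s ≤ 1/2 := distToInt_le_half θ1
  have ht2 : t ≤ 1/2 := distToInt_le_half θ2
  have key : m ^ 2 ≤ |v θ1 - v θ2| := by
    rw [hvs, hvt]
    rcases le_total s t with h | h
    · have hcore := core_lemma hv hs0 h ht2
      have habs : |s - t| = t - s := by rw [abs_sub_comm, abs_of_nonneg (by linarith)]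
      have hmm : m ^ 2 ≤ (t - s) ^ 2 := by
        apply pow_le_pow_left₀ hm0; linarith [hmle, habs]
      calc m ^ 2 ≤ (t - s) ^ 2 := hmm
        _ ≤ v s - v t := hcore
        _ ≤ |v s - v t| := le_abs_self _
    · have hcore := core_lemma hv ht0 h hs2
      have habs : |s - t| = s - t := abs_of_nonneg (by linarith)
      have hmm : m ^ 2 ≤ (s - t) ^ 2 := by
        apply pow_le_pow_left₀ hm0; linarith [hmle, habs]
      calc m ^ 2 ≤ (s - t) ^ 2 := hmm
        _ ≤ v t - v s := hcore
        _ ≤ |v s - v t| := by rw [abs_sub_comm]; exact le_abs_self _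
  have h2 : |v θ1 - v θ2| ≤ 2 * delta0 ε₀ := by
    obtain ⟨a1, a2⟩ := abs_lt.1 hx
    obtain ⟨b1, b2⟩ := abs_lt.1 hy
    rw [abs_le]
    constructor <;> linarith
  refine ⟨key, h2, ?_⟩
  have hms : m ^ 2 ≤ 2 * delta0 ε₀ := key.trans h2
  rw [← Real.sqrt_eq_rpow]
  nlinarith [Real.sq_sqrt hδ.le, Real.sqrt_nonneg (delta0 ε₀), hms, hm0,
    sq_nonneg (m - 2 * Real.sqrt (delta0 ε₀)), sq_nonneg (m + 2 * Real.sqrt (delta0 ε₀))]
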